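/- For every natural number m ≥ 2, m ≤ 3·φ(m)^{3/2}, where φ is Euler's totient function. -/

import Mathlib

/-- Coprime to 6: `n^2 ≤ φ(n)^3`. -/
lemma lemA : ∀ n : ℕ, Nat.Coprime n 6 → n ^ 2 ≤ (Nat.totient n) ^ 3 := by
  intro n
  induction n using Nat.recOnPosPrimePosCoprime with
  | prime_pow p k hp hk =>
    intro hcop
    have hp' : Nat.Prime p := hp
    have h5 : 5 ≤ p := by
      have h2 : ¬ (2 ∣ p ^ k) := by
        intro hdvd
        have h1 : (2:ℕ) ∣ 1 := hcop ▸ Nat.dvd_gcd hdvd (by norm_num)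
        omega
      have h3 : ¬ (3 ∣ p ^ k) := by
        intro hdvd
        have h1 : (3:ℕ) ∣ 1 := hcop ▸ Nat.dvd_gcd hdvd (by norm_num)
        omega
      have hp2 : p ≠ 2 := by rintro rfl; exact h2 (dvd_pow_self 2 hk.ne')
      have hp3 : p ≠ 3 := by rintro rfl; exact h3 (dvd_pow_self 3 hk.ne')
      have hp4 : p ≠ 4 := by rintro rfl; norm_num at hp'
      have := hp'.two_le
      omega
    rw [Nat.totient_prime_pow hp' hk]
    have hcube : p ^ 2 ≤ (p - 1) ^ 3 := by
      obtain ⟨q, rfl⟩ : ∃ q, p = q + 1 := ⟨p - 1, by omega⟩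
      simp only [Nat.add_sub_cancel]
      nlinarith [show 4 ≤ q by omega]
    calc (p ^ k) ^ 2 = p ^ (2 * k) := by rw [← pow_mul, Nat.mul_comm]
      _ ≤ p ^ (3 * k - 1) := Nat.pow_le_pow_right (by omega) (by omega)
      _ = p ^ (3 * (k - 1)) * p ^ 2 := by rw [← pow_add]; congr 1; omega
      _ ≤ p ^ (3 * (k - 1)) * (p - 1) ^ 3 := Nat.mul_le_mul_left _ hcube
      _ = (p ^ (k - 1) * (p - 1)) ^ 3 := by rw [mul_pow, ← pow_mul, Nat.mul_comm (k-1) 3]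
  | zero => intro h; simp [Nat.Coprime] at h
  | one => intro _; simp
  | coprime a b ha hb hab iha ihb =>
    intro hcop
    have hca : Nat.Coprime a 6 := Nat.Coprime.coprime_dvd_left (Dvd.intro b rfl) hcop
    have hcb : Nat.Coprime b 6 := Nat.Coprime.coprime_dvd_left (Dvd.intro_left a rfl) hcop
    rw [Nat.totient_mul hab, mul_pow, mul_pow]
    exact Nat.mul_le_mul (iha hca) (ihb hcb)

/-- Odd `t`: `8 t² ≤ 9 φ(t)³`. -/
lemma lemB (t : ℕ) (ht : Odd t) : 8 * t ^ 2 ≤ 9 * (Nat.totient t) ^ 3 := by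
  have ht0 : t ≠ 0 := by rintro rfl; simp at ht
  set b := t.factorization 3 with hb
  set s := t / 3 ^ b with hs
  have hdecomp : 3 ^ b * s = t := Nat.ordProj_mul_ordCompl_eq_self t 3
  have hsd : s ∣ t := Nat.ordCompl_dvd t 3
  have hnd3 : ¬ (3 ∣ s) := Nat.not_dvd_ordCompl (by norm_num) ht0
  clear_value s b
  have hsodd : Odd s := by
    rcases ht with ⟨k, hk⟩
    rcases Nat.even_or_odd s with he | ho
    · exfalso
      have : 2 ∣ t := dvd_trans he.two_dvd hsd
      omega
    · exact ho
  have hc3 : Nat.Coprime 3 s := (Nat.Prime.coprime_iff_not_dvd Nat.prime_three).mpr hnd3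
  have hcops : Nat.Coprime s 6 := by
    have h2 : Nat.Coprime s 2 := Nat.coprime_two_right.mpr hsodd
    have : (6 : ℕ) = 2 * 3 := by norm_num
    rw [this]
    exact Nat.Coprime.mul_right h2 hc3.symm
  have hA : s ^ 2 ≤ (Nat.totient s) ^ 3 := lemA s hcops
  rcases Nat.eq_zero_or_pos b with hb0 | hbpos
  · rw [hb0, pow_zero, one_mul] at hdecomp
    subst hdecomp
    omega
  · obtain ⟨b', rfl⟩ : ∃ b', b = b' + 1 := ⟨b - 1, by omega⟩
    rw [← hdecomp, Nat.totient_mul (Nat.Coprime.pow_left _ hc3),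
      Nat.totient_prime_pow Nat.prime_three (Nat.succ_pos b')]
    have h93 : ((3:ℕ) ^ (b'+1)) ^ 2 = 9 * 9 ^ b' := by
      rw [pow_right_comm]; norm_num [pow_succ]; ring
    have h273 : ((3:ℕ) ^ b') ^ 3 = 27 ^ b' := by
      rw [pow_right_comm]; norm_num
    calc 8 * (3 ^ (b'+1) * s) ^ 2 = 72 * 9 ^ b' * s ^ 2 := by rw [mul_pow, h93]; ring
      _ ≤ 72 * 27 ^ b' * (Nat.totient s) ^ 3 :=
          Nat.mul_le_mul (Nat.mul_le_mul_left 72 (Nat.pow_le_pow_left (by norm_num) _)) hA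
      _ = 9 * (3 ^ (b'+1-1) * (3-1) * Nat.totient s) ^ 3 := by
          norm_num [mul_pow, h273]; ring

/-- key nat inequality -/
lemma lemKey (m : ℕ) : m ^ 2 ≤ 9 * (Nat.totient m) ^ 3 := by
  rcases Nat.eq_zero_or_pos m with rfl | hm0
  · simp
  set a := m.factorization 2 with ha
  set t := m / 2 ^ a with hts
  have hdecomp : 2 ^ a * t = m := Nat.ordProj_mul_ordCompl_eq_self m 2
  have hnd2 : ¬ (2 ∣ t) := Nat.not_dvd_ordCompl (by norm_num) hm0.ne'
  clear_value t a
  have htodd : Odd t := Nat.odd_iff.mpr (by omega)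
  have hB := lemB t htodd
  rcases Nat.eq_zero_or_pos a with ha0 | hapos
  · rw [ha0, pow_zero, one_mul] at hdecomp
    subst hdecomp
    omega
  · obtain ⟨a', rfl⟩ : ∃ a', a = a' + 1 := ⟨a - 1, by omega⟩
    have hc2 : Nat.Coprime 2 t := (Nat.Prime.coprime_iff_not_dvd Nat.prime_two).mpr hnd2
    rw [← hdecomp, Nat.totient_mul (Nat.Coprime.pow_left _ hc2),
      Nat.totient_prime_pow Nat.prime_two (Nat.succ_pos a')]
    have h4 : ((2:ℕ) ^ (a'+1)) ^ 2 = 4 * 4 ^ a' := by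
      rw [pow_right_comm]; norm_num [pow_succ]; ring
    have h8 : ((2:ℕ) ^ a') ^ 3 = 8 ^ a' := by rw [pow_right_comm]; norm_num
    have h48 : (4:ℕ) * 4 ^ a' ≤ 8 * 8 ^ a' :=
      Nat.mul_le_mul (by norm_num) (Nat.pow_le_pow_left (by norm_num) _)
    calc (2 ^ (a'+1) * t) ^ 2 = (4 * 4 ^ a') * t ^ 2 := by rw [mul_pow, h4]
      _ ≤ (8 * 8 ^ a') * t ^ 2 := Nat.mul_le_mul_right _ h48
      _ = 8 ^ a' * (8 * t ^ 2) := by ring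
      _ ≤ 8 ^ a' * (9 * (Nat.totient t) ^ 3) := Nat.mul_le_mul_left _ hB
      _ = 9 * (2 ^ (a'+1-1) * (2-1) * Nat.totient t) ^ 3 := by
          norm_num [mul_pow, h8]; ring

/-- For every natural number `m ≥ 2`, `m ≤ 3 φ(m)^{3/2}`. -/
theorem stmt_12 (m : ℕ) (hm : 2 ≤ m) :
    (m : ℝ) ≤ 3 * (Nat.totient m : ℝ) ^ (3 / 2 : ℝ) := by
  have key : (m : ℝ) ^ 2 ≤ 9 * (Nat.totient m : ℝ) ^ 3 := by
    exact_mod_cast lemKey m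
  have hφ : (0 : ℝ) ≤ (Nat.totient m : ℝ) := by positivity
  have hsq : ((Nat.totient m : ℝ) ^ ((3:ℝ)/2)) ^ 2 = (Nat.totient m : ℝ) ^ 3 := by
    rw [← Real.rpow_natCast ((Nat.totient m : ℝ) ^ ((3:ℝ)/2)) 2, ← Real.rpow_mul hφ]
    norm_num
  have hrp : (0 : ℝ) ≤ (Nat.totient m : ℝ) ^ ((3:ℝ)/2) := Real.rpow_nonneg hφ _
  nlinarith [key, hsq, hrp, Nat.cast_nonneg (α := ℝ) m]
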